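/- Let α and β be algebraic units in ℂ. If [ℚ(β):ℚ] = [ℚ(αβ):ℚ] = [ℚ(α)(β):ℚ(α)], then α^n = 1 or α^n = -1, where n = [ℚ(β):ℚ]. -/

import Mathlib

open Polynomial IntermediateField

/-- An algebraic unit: root of a monic integer polynomial with constant term ±1. -/
def IsAlgebraicUnit (α : ℂ) : Prop :=
  ∃ p : Polynomial ℤ, p.Monic ∧ (p.coeff 0 = 1 ∨ p.coeff 0 = -1) ∧ Polynomial.aeval α p = 0

/-- The degree of α over ℚ, i.e. [ℚ(α):ℚ]. -/
noncomputable def degQ (α : ℂ) : ℕ := (minpoly ℚ α).natDegree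

lemma alg_unit_integral {γ : ℂ} (h : IsAlgebraicUnit γ) :
    IsIntegral ℤ γ ∧ IsIntegral ℤ γ⁻¹ ∧ γ ≠ 0 := by
  obtain ⟨p, hm, hc, h0⟩ := h
  have hγ : IsIntegral ℤ γ := ⟨p, hm, h0⟩
  have hc0 : p.coeff 0 ≠ 0 := by rcases hc with h | h <;> rw [h] <;> norm_num
  have hne : γ ≠ 0 := by
    rintro rfl
    rw [show (0 : ℂ) = algebraMap ℤ ℂ 0 by simp, aeval_algebraMap_apply] at h0
    rw [show Polynomial.aeval (0 : ℤ) p = p.coeff 0 by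
      simp [Polynomial.coeff_zero_eq_eval_zero]] at h0
    exact hc0 (by simpa using h0)
  refine ⟨hγ, ?_, hne⟩
  have hkey : γ * Polynomial.aeval γ p.divX + (p.coeff 0 : ℂ) = 0 := by
    have h' := congrArg (Polynomial.aeval γ) (Polynomial.X_mul_divX_add p)
    simp only [map_add, map_mul, aeval_X, aeval_C] at h'
    rw [h0] at h'
    simpa using h'
  have hint : IsIntegral ℤ (Polynomial.aeval γ p.divX) := by
    set S := integralClosure ℤ ℂ
    have hγS : γ ∈ S := hγ
    have heq : Polynomial.aeval γ p.divX
        = algebraMap S ℂ (Polynomial.aeval (⟨γ, hγS⟩ : S) p.divX) := by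
      rw [← aeval_algebraMap_apply]
      rfl
    rw [heq]
    exact (Polynomial.aeval (⟨γ, hγS⟩ : S) p.divX).2
  have hinv : γ⁻¹ = -(p.coeff 0 : ℂ) * Polynomial.aeval γ p.divX := by
    apply inv_eq_of_mul_eq_one_right
    have hmul : γ * Polynomial.aeval γ p.divX = -(p.coeff 0 : ℂ) := by linear_combination hkey
    rcases hc with h | h <;> rw [mul_comm γ, mul_assoc, mul_comm _ γ, hmul, h] <;> norm_num
  rw [hinv]
  have hcint : IsIntegral ℤ (-(p.coeff 0 : ℂ)) := by
    have : ((p.coeff 0 : ℤ) : ℂ) = algebraMap ℤ ℂ (p.coeff 0) := rfl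
    rw [this]
    exact (isIntegral_algebraMap).neg
  exact hcint.mul hint

lemma coeff0_pm {γ : ℂ} (hγ : IsIntegral ℤ γ) (hγi : IsIntegral ℤ γ⁻¹) (hne : γ ≠ 0) :
    (minpoly ℚ γ).coeff 0 = 1 ∨ (minpoly ℚ γ).coeff 0 = -1 := by
  have heq := minpoly.isIntegrallyClosed_eq_field_fractions' ℚ hγ
  have hrev : Polynomial.aeval γ (minpoly ℤ γ⁻¹).reverse = 0 := by
    have hinv : Invertible γ⁻¹ := invertibleOfNonzero (inv_ne_zero hne)
    have h2 := (Polynomial.eval₂_reverse_eq_zero_iff (algebraMap ℤ ℂ) γ⁻¹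
      (minpoly ℤ γ⁻¹)).mpr (minpoly.aeval ℤ γ⁻¹)
    rw [aeval_def]
    rwa [invOf_eq_inv, inv_inv] at h2
  have hdvd : minpoly ℤ γ ∣ (minpoly ℤ γ⁻¹).reverse := minpoly.isIntegrallyClosed_dvd hγ hrev
  obtain ⟨t, ht⟩ := hdvd
  have h1 : (1 : ℤ) = (minpoly ℤ γ).coeff 0 * t.coeff 0 := by
    have h' := congrArg (fun q => Polynomial.coeff q 0) ht
    simpa [Polynomial.coeff_zero_reverse, (minpoly.monic hγi).leadingCoeff,
      Polynomial.mul_coeff_zero] using h'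
  have hu : IsUnit ((minpoly ℤ γ).coeff 0) := IsUnit.of_mul_eq_one _ h1.symm
  rcases Int.isUnit_iff.mp hu with h | h <;> [left; right] <;>
    rw [heq, Polynomial.coeff_map, h] <;> simp

lemma minpoly_eq_map {K : IntermediateField ℚ ℂ} {γ : ℂ} (hγ : IsIntegral ℚ γ)
    (h : (minpoly (↥K) γ).natDegree = (minpoly ℚ γ).natDegree) :
    minpoly (↥K) γ = (minpoly ℚ γ).map (algebraMap ℚ K) := by
  set P := (minpoly ℚ γ).map (algebraMap ℚ K) with hP
  have hPm : P.Monic := (minpoly.monic hγ).map _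
  have hdvd : minpoly (↥K) γ ∣ P :=
    minpoly.dvd (↥K) γ (by rw [hP, aeval_map_algebraMap]; exact minpoly.aeval ℚ γ)
  obtain ⟨t, ht⟩ := hdvd
  have hKm : (minpoly (↥K) γ).Monic := minpoly.monic hγ.tower_top
  have htm : t.Monic := hKm.of_mul_monic_left (ht ▸ hPm)
  have hdeg : t.natDegree = 0 := by
    have h' := congrArg Polynomial.natDegree ht
    rw [Polynomial.natDegree_map, hKm.natDegree_mul htm, h] at h'
    omega
  rw [ht, Polynomial.eq_one_of_monic_natDegree_zero htm hdeg, mul_one]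

/-- The transform `X ↦ c⁻¹ X` scaled to be monic again. -/
lemma transform_spec {F : Type*} [Field F] (p : Polynomial F) (hp : p.Monic) (c : F)
    (hc : c ≠ 0) :
    (Polynomial.C (c ^ p.natDegree) * p.comp (Polynomial.C c⁻¹ * Polynomial.X)).Monic ∧
    (Polynomial.C (c ^ p.natDegree) * p.comp (Polynomial.C c⁻¹ * Polynomial.X)).natDegree
      = p.natDegree ∧
    (Polynomial.C (c ^ p.natDegree) * p.comp (Polynomial.C c⁻¹ * Polynomial.X)).coeff 0
      = c ^ p.natDegree * p.coeff 0 := by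
  have hcinv : c⁻¹ ≠ 0 := inv_ne_zero hc
  have hq1 : (Polynomial.C c⁻¹ * Polynomial.X : Polynomial F).natDegree = 1 := by
    rw [Polynomial.natDegree_C_mul hcinv, Polynomial.natDegree_X]
  have hqlc : (Polynomial.C c⁻¹ * Polynomial.X : Polynomial F).leadingCoeff = c⁻¹ := by
    rw [Polynomial.leadingCoeff_mul, Polynomial.leadingCoeff_C, Polynomial.leadingCoeff_X, mul_one]
  have hlc : (p.comp (Polynomial.C c⁻¹ * Polynomial.X)).leadingCoeff = c⁻¹ ^ p.natDegree := by
    rw [Polynomial.leadingCoeff_comp (by rw [hq1]; norm_num), hp.leadingCoeff, hqlc, one_mul]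
  have hcompdeg : (p.comp (Polynomial.C c⁻¹ * Polynomial.X)).natDegree = p.natDegree := by
    rw [Polynomial.natDegree_comp, hq1, mul_one]
  refine ⟨?_, ?_, ?_⟩
  · unfold Polynomial.Monic
    rw [Polynomial.leadingCoeff_mul, Polynomial.leadingCoeff_C, hlc, ← mul_pow,
      mul_inv_cancel₀ hc, one_pow]
  · rw [Polynomial.natDegree_C_mul (pow_ne_zero _ hc), hcompdeg]
  · rw [Polynomial.mul_coeff_zero, Polynomial.coeff_C_zero,
      Polynomial.coeff_zero_eq_eval_zero, Polynomial.eval_comp]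
    simp [Polynomial.coeff_zero_eq_eval_zero]

lemma monic_dvd_eq {R : Type*} [CommRing R] {p q : Polynomial R} (hp : p.Monic) (hq : q.Monic)
    (hdvd : p ∣ q) (hdeg : q.natDegree ≤ p.natDegree) : p = q := by
  obtain ⟨t, ht⟩ := hdvd
  have htm : t.Monic := hp.of_mul_monic_left (ht ▸ hq)
  have h' := congrArg Polynomial.natDegree ht
  rw [hp.natDegree_mul htm] at h'
  have hdeg0 : t.natDegree = 0 := by omega
  rw [ht, Polynomial.eq_one_of_monic_natDegree_zero htm hdeg0, mul_one]

theorem stmt_0 (α β : ℂ) (hα : IsAlgebraicUnit α) (hβ : IsAlgebraicUnit β)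
    (h1 : degQ β = degQ (α * β))
    (h2 : degQ β = (minpoly (↥ℚ⟮α⟯) β).natDegree) :
    α ^ (degQ β) = 1 ∨ α ^ (degQ β) = -1 := by
  obtain ⟨hαint, hαinv, hα0⟩ := alg_unit_integral hα
  obtain ⟨hβint, hβinv, hβ0⟩ := alg_unit_integral hβ
  set K := ℚ⟮α⟯ with hK
  set n := degQ β with hn
  have haK : α ∈ K := mem_adjoin_simple_self ℚ α
  set a : (↥K) := ⟨α, haK⟩ with ha
  have haC : algebraMap (↥K) ℂ a = α := rfl
  have ha0 : a ≠ 0 := by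
    intro h
    apply hα0
    rw [← haC, h, map_zero]
  -- integrality
  have hβQ : IsIntegral ℚ β := hβint.tower_top
  have hαQ : IsIntegral ℚ α := hαint.tower_top
  have hαβQ : IsIntegral ℚ (α * β) := hαQ.mul hβQ
  have hβK : IsIntegral (↥K) β := hβQ.tower_top
  have hαβK : IsIntegral (↥K) (α * β) := hαβQ.tower_top
  set P := minpoly (↥K) β with hPdef
  set Q := minpoly (↥K) (α * β) with hQdef
  have hPm : P.Monic := minpoly.monic hβK
  have hQm : Q.Monic := minpoly.monic hαβK
  have hPdeg : P.natDegree = n := h2.symm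
  -- deg Q ≤ n
  have hQle : Q.natDegree ≤ n := by
    have hdvd : Q ∣ (minpoly ℚ (α * β)).map (algebraMap ℚ (↥K)) :=
      minpoly.dvd (↥K) (α * β) (by rw [aeval_map_algebraMap]; exact minpoly.aeval ℚ (α * β))
    have hne : ((minpoly ℚ (α * β)).map (algebraMap ℚ (↥K))) ≠ 0 :=
      ((minpoly.monic hαβQ).map _).ne_zero
    have h' := Polynomial.natDegree_le_of_dvd hdvd hne
    rwa [Polynomial.natDegree_map,
      show (minpoly ℚ (α * β)).natDegree = degQ (α * β) from rfl, ← h1] at h'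
  -- deg Q ≥ n
  have hQge : n ≤ Q.natDegree := by
    obtain ⟨hrm, hrdeg, -⟩ := transform_spec Q hQm a⁻¹ (inv_ne_zero ha0)
    set r := Polynomial.C (a⁻¹ ^ Q.natDegree) * Q.comp (Polynomial.C a⁻¹⁻¹ * Polynomial.X) with hr
    have hrz : Polynomial.aeval β r = 0 := by
      rw [hr, map_mul, aeval_C, Polynomial.aeval_comp]
      have : Polynomial.aeval β (Polynomial.C a⁻¹⁻¹ * Polynomial.X) = α * β := by
        rw [inv_inv]
        simp [map_mul, aeval_C, aeval_X, haC]
      rw [this, minpoly.aeval, mul_zero]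
    have hdvd : P ∣ r := minpoly.dvd (↥K) β hrz
    have h' := Polynomial.natDegree_le_of_dvd hdvd hrm.ne_zero
    rwa [hrdeg, hPdeg] at h'
  have hQdeg : Q.natDegree = n := le_antisymm hQle hQge
  -- the key identity : Q = C (a^n) * P.comp (C a⁻¹ * X)
  obtain ⟨hqm, hqdeg, hqc0⟩ := transform_spec P hPm a ha0
  set q := Polynomial.C (a ^ P.natDegree) * P.comp (Polynomial.C a⁻¹ * Polynomial.X) with hq
  have hqz : Polynomial.aeval (α * β) q = 0 := by
    rw [hq, map_mul, aeval_C, Polynomial.aeval_comp]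
    have : Polynomial.aeval (α * β) (Polynomial.C a⁻¹ * Polynomial.X) = β := by
      simp only [map_mul, aeval_C, aeval_X]
      have : algebraMap (↥K) ℂ a⁻¹ = α⁻¹ := by
        rw [map_inv₀, haC]
      rw [this]
      field_simp
    rw [this, minpoly.aeval, mul_zero]
  have hQq : Q = q := by
    apply monic_dvd_eq hQm hqm (minpoly.dvd (↥K) (α * β) hqz)
    rw [hqdeg, hPdeg, hQdeg]
  -- coefficients at 0
  have hPmap : P = (minpoly ℚ β).map (algebraMap ℚ (↥K)) :=
    minpoly_eq_map hβQ (by rw [hPdeg]; rfl)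
  have hQmap : Q = (minpoly ℚ (α * β)).map (algebraMap ℚ (↥K)) :=
    minpoly_eq_map hαβQ (by
      rw [hQdeg, show (minpoly ℚ (α * β)).natDegree = degQ (α * β) from rfl, ← h1])
  have hαβ0 : α * β ≠ 0 := mul_ne_zero hα0 hβ0
  have hαβinv : IsIntegral ℤ (α * β)⁻¹ := by
    rw [mul_inv]
    exact hαinv.mul hβinv
  have hPc := coeff0_pm hβint hβinv hβ0
  have hQc := coeff0_pm ((hαint.mul hβint)) hαβinv hαβ0
  -- combine
  have hkey : Q.coeff 0 = a ^ n * P.coeff 0 := by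
    rw [hQq, hqc0, hPdeg]
  have hgoal : a ^ n = 1 ∨ a ^ n = -1 := by
    have hP0 : P.coeff 0 = algebraMap ℚ (↥K) ((minpoly ℚ β).coeff 0) := by
      rw [hPmap, Polynomial.coeff_map]
    have hQ0 : Q.coeff 0 = algebraMap ℚ (↥K) ((minpoly ℚ (α * β)).coeff 0) := by
      rw [hQmap, Polynomial.coeff_map]
    rcases hPc with hp | hp <;> rcases hQc with hq' | hq' <;>
      rw [hP0, hp, hQ0, hq'] at hkey <;>
      simp only [map_one, map_neg, mul_one, mul_neg] at hkey <;>
      first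
        | (left; linear_combination hkey)
        | (right; linear_combination hkey)
        | (left; linear_combination -hkey)
        | (right; linear_combination -hkey)
  rcases hgoal with h | h
  · left
    have := congrArg (algebraMap (↥K) ℂ) h
    rwa [map_pow, haC, map_one] at this
  · right
    have := congrArg (algebraMap (↥K) ℂ) h
    rwa [map_pow, haC, map_neg, map_one] at this
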